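/- Let (T⊕, T⊗) be a 3-homogeneous latin bitrade on finite sets A₁, A₂, A₃ in which every element of each Aᵢ occurs in some triple of T⊕, and let τ₁, τ₂, τ₃ be the associated permutations of T⊕. Then for each i ∈ {1,2,3}, the number of orbits of τᵢ on T⊕ equals |T⊕|/3; in particular the numbers of orbits of τ₁, τ₂, τ₃ are all equal. -/

import Mathlib

/-- `agreeCoord r a b` says the triples `a` and `b` agree in coordinate `r`. -/
def agreeCoord {A₁ A₂ A₃ : Type*} (r : Fin 3) (a b : A₁ × A₂ × A₃) : Prop :=
  ![a.1 = b.1, a.2.1 = b.2.1, a.2.2 = b.2.2] r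

/-- A partial latin square: any two triples agreeing in two coordinates are equal. -/
def IsPLS {A₁ A₂ A₃ : Type*} (T : Set (A₁ × A₂ × A₃)) : Prop :=
  ∀ a ∈ T, ∀ b ∈ T, ∀ r s : Fin 3, r ≠ s →
    agreeCoord r a b → agreeCoord s a b → a = b

/-- A latin bitrade `(Tp, Tm)`: two disjoint partial latin squares such that for each
triple of one and each pair of coordinates there is a unique triple of the other
agreeing with it in those two coordinates. -/
structure IsBitrade {A₁ A₂ A₃ : Type*} (Tp Tm : Set (A₁ × A₂ × A₃)) : Prop where
  pls_left : IsPLS Tp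
  pls_right : IsPLS Tm
  disj : Tp ∩ Tm = ∅
  r2 : ∀ a ∈ Tp, ∀ r s : Fin 3, r ≠ s →
    ∃! b, b ∈ Tm ∧ agreeCoord r a b ∧ agreeCoord s a b
  r3 : ∀ a ∈ Tm, ∀ r s : Fin 3, r ≠ s →
    ∃! b, b ∈ Tp ∧ agreeCoord r a b ∧ agreeCoord s a b

/-- `IsBetaMap r β` says that the bijection `β : Tm ≃ Tp` sends each triple of `Tm`
to a triple of `Tp` agreeing with it in the two coordinates other than `r`
(this characterizes the bijection `β_r`). -/
def IsBetaMap {A₁ A₂ A₃ : Type*} {Tp Tm : Set (A₁ × A₂ × A₃)}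
    (r : Fin 3) (β : Tm ≃ Tp) : Prop :=
  ∀ x : Tm, ∀ s : Fin 3, s ≠ r → agreeCoord s x.val (β x).val

/-- A bitrade is 3-homogeneous if each row, column and symbol occurs in exactly
3 triples of `Tp`. -/
def ThreeHomogeneous {A₁ A₂ A₃ : Type*} (Tp : Set (A₁ × A₂ × A₃)) : Prop :=
  (∀ x : A₁, {a ∈ Tp | a.1 = x}.ncard = 3) ∧
  (∀ y : A₂, {a ∈ Tp | a.2.1 = y}.ncard = 3) ∧
  (∀ z : A₃, {a ∈ Tp | a.2.2 = z}.ncard = 3)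


lemma pi_zpow {α B : Type*} {T : Set α} (τ : Equiv.Perm T) (π : α → B)
    (hinv : ∀ a : T, π ((τ a) : α) = π (a : α)) :
    ∀ (n : ℤ) (a : T), π (((τ ^ n) a : T) : α) = π (a : α) := by
  have hinv' : ∀ a : T, π (((τ⁻¹) a : T) : α) = π (a : α) := by
    intro a
    conv_rhs => rw [← (show τ (τ⁻¹ a) = a from (Equiv.eq_symm_apply τ).mp rfl)]
    rw [hinv]
  intro n
  induction n using Int.induction_on with
  | zero => simp
  | succ n ih =>
      intro a
      have : (τ ^ ((n : ℤ) + 1)) a = (τ ^ (n : ℤ)) (τ a) := by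
        rw [zpow_add, zpow_one, Equiv.Perm.mul_apply]
      rw [this, ih, hinv]
  | pred n ih =>
      intro a
      have h1 : (τ ^ (-(n : ℤ) - 1)) a = τ⁻¹ ((τ ^ (-(n : ℤ))) a) := by
        rw [sub_eq_add_neg, add_comm, zpow_add, zpow_neg_one, Equiv.Perm.mul_apply]
      rw [h1, hinv', ih]

lemma orbit_count {α B : Type*} [Finite α] [Finite B] {T : Set α}
    (τ : Equiv.Perm T) (π : α → B)
    (hinv : ∀ a : T, π ((τ a) : α) = π (a : α))
    (hfib : ∀ b : B, {a ∈ T | π a = b}.ncard = 3)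
    (hsurj : ∀ b : B, ∃ a ∈ T, π a = b)
    (hfix : ∀ a : T, τ a ≠ a) :
    {o : Set T | ∃ a : T, o = {b : T | τ.SameCycle a b}}.ncard = T.ncard / 3 := by
  classical
  -- fibers inside the subtype
  set F : B → Set T := fun b => {x : T | π x.val = b} with hFdef
  have hFcard : ∀ b : B, (F b).ncard = 3 := by
    intro b
    have himg : Subtype.val '' (F b) = {a ∈ T | π a = b} := by
      ext a
      simp only [Set.mem_image, Set.mem_setOf_eq, Set.mem_sep_iff]
      constructor
      · rintro ⟨x, hx, rfl⟩; exact ⟨x.2, hx⟩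
      · rintro ⟨ha, hb⟩; exact ⟨⟨a, ha⟩, hb, rfl⟩
    rw [← hfib b, ← himg, Set.ncard_image_of_injective _ Subtype.val_injective]
  -- key: same cycle iff same fiber
  have key : ∀ a b : T, τ.SameCycle a b ↔ π a.val = π b.val := by
    intro a b
    constructor
    · rintro ⟨n, rfl⟩
      exact (pi_zpow τ π hinv n a).symm
    · intro hab
      -- τ² a ≠ a
      have h2 : τ (τ a) ≠ a := by
        intro hcyc
        have haF : a ∈ F (π a.val) := rfl
        have htaF : τ a ∈ F (π a.val) := hinv a
        have hne : τ a ≠ a := hfix a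
        have hpair : ({a, τ a} : Set T).ncard = 2 := by
          rw [Set.ncard_pair (Ne.symm hne)]
        have hsub : ({a, τ a} : Set T) ⊆ F (π a.val) := by
          rintro x (rfl | rfl); exacts [haF, htaF]
        have hss : ({a, τ a} : Set T) ⊂ F (π a.val) := by
          refine ⟨hsub, fun hle => ?_⟩
          have hle2 := Set.ncard_le_ncard hle (Set.toFinite _)
          rw [hpair, hFcard] at hle2
          omega
        obtain ⟨x, hxF, hxpair⟩ := Set.exists_of_ssubset hss
        have hxa : x ≠ a := fun h => hxpair (by simp [h])
        have hxta : x ≠ τ a := fun h => hxpair (by simp [h])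
        have htriple : ({a, τ a, x} : Set T) ⊆ F (π a.val) := by
          rintro y (rfl | rfl | rfl); exacts [haF, htaF, hxF]
        have htc : ({a, τ a, x} : Set T).ncard = 3 := by
          rw [Set.ncard_insert_of_notMem (by simp [Ne.symm hne, Ne.symm hxa]) (Set.toFinite _),
            Set.ncard_pair (Ne.symm hxta)]
        have hFeq : ({a, τ a, x} : Set T) = F (π a.val) :=
          Set.eq_of_subset_of_ncard_le htriple (by rw [htc, hFcard]) (Set.toFinite _)
        have htxF : τ x ∈ F (π a.val) := by
          have : π (x : α) = π a.val := hxF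
          show π ((τ x : T) : α) = π a.val
          rw [hinv x, this]
        rw [← hFeq] at htxF
        rcases htxF with h | h | h
        · exact hxta (τ.injective (by rw [h, hcyc]))
        · exact hxa (τ.injective h)
        · exact hfix x h
      have hne : τ a ≠ a := hfix a
      have h21 : τ (τ a) ≠ τ a := fun h => hne (τ.injective h)
      have haF : a ∈ F (π a.val) := rfl
      have htaF : τ a ∈ F (π a.val) := hinv a
      have httaF : τ (τ a) ∈ F (π a.val) := by
        show π ((τ (τ a) : T) : α) = π a.val
        rw [hinv (τ a)]; exact hinv a
      have htriple : ({a, τ a, τ (τ a)} : Set T) ⊆ F (π a.val) := by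
        rintro y (rfl | rfl | rfl); exacts [haF, htaF, httaF]
      have htc : ({a, τ a, τ (τ a)} : Set T).ncard = 3 := by
        have hane : a ∉ ({τ a, τ (τ a)} : Set T) := by
          simp only [Set.mem_insert_iff, Set.mem_singleton_iff]
          push_neg
          exact ⟨Ne.symm hne, fun hh => h2 hh.symm⟩
        rw [Set.ncard_insert_of_notMem hane (Set.toFinite _),
          Set.ncard_pair (Ne.symm h21)]
      have hFeq : ({a, τ a, τ (τ a)} : Set T) = F (π a.val) :=
        Set.eq_of_subset_of_ncard_le htriple (by rw [htc, hFcard]) (Set.toFinite _)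
      have hbF : b ∈ F (π a.val) := hab.symm
      rw [← hFeq] at hbF
      rcases hbF with rfl | rfl | rfl
      · exact Equiv.Perm.SameCycle.refl τ b
      · exact ⟨1, by simp⟩
      · exact ⟨2, by rw [show ((2:ℤ)) = 1 + 1 by norm_num, zpow_add, zpow_one]; rfl⟩
  -- orbit set = range of fibers
  have horb : {o : Set T | ∃ a : T, o = {b : T | τ.SameCycle a b}} = Set.range F := by
    ext o
    simp only [Set.mem_setOf_eq, Set.mem_range]
    constructor
    · rintro ⟨a, rfl⟩
      refine ⟨π a.val, ?_⟩
      ext b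
      simp only [hFdef, Set.mem_setOf_eq]
      rw [key a b]
      exact ⟨fun h => h.symm, fun h => h.symm⟩
    · rintro ⟨b, rfl⟩
      obtain ⟨a, ha, hab⟩ := hsurj b
      refine ⟨⟨a, ha⟩, ?_⟩
      ext c
      simp only [hFdef, Set.mem_setOf_eq]
      rw [key ⟨a, ha⟩ c, hab]
      exact ⟨fun h => h.symm, fun h => h.symm⟩
  have hFinj : Function.Injective F := by
    intro b₁ b₂ hEq
    obtain ⟨a, ha, hab⟩ := hsurj b₁
    have h1 : (⟨a, ha⟩ : T) ∈ F b₁ := hab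
    rw [hEq] at h1
    rw [← hab]; exact h1
  have hrange : (Set.range F).ncard = Nat.card B := by
    rw [← Set.image_univ, Set.ncard_image_of_injective _ hFinj, Set.ncard_univ]
  -- cardinality of T
  cases nonempty_fintype B
  have hTcard : T.ncard = 3 * Nat.card B := by
    have e := Equiv.sigmaFiberEquiv (fun x : T => π x.val)
    cases nonempty_fintype (↑T : Type _)
    have inst : ∀ b : B, Fintype {x : T // π x.val = b} := fun b => Fintype.ofFinite _
    have : Nat.card T = ∑ b : B, Nat.card {x : T // π x.val = b} := by
      simp only [Nat.card_eq_fintype_card]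
      rw [← Fintype.card_congr e, Fintype.card_sigma]
    have hfib' : ∀ b : B, Nat.card {x : T // π x.val = b} = 3 := by
      intro b
      have h1 : Nat.card {x : T // π x.val = b} = Nat.card (F b) := rfl
      rw [h1, Nat.card_coe_set_eq, hFcard]
    rw [← Nat.card_coe_set_eq, this]
    simp only [hfib']
    simp [Finset.sum_const, Nat.card_eq_fintype_card, mul_comm]
  rw [horb, hrange, hTcard, Nat.mul_div_cancel_left _ (by norm_num)]

lemma agreeCoord_iff0 {A₁ A₂ A₃ : Type*} (a b : A₁ × A₂ × A₃) :
    agreeCoord 0 a b ↔ a.1 = b.1 := by simp [agreeCoord]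

lemma agreeCoord_iff1 {A₁ A₂ A₃ : Type*} (a b : A₁ × A₂ × A₃) :
    agreeCoord 1 a b ↔ a.2.1 = b.2.1 := by simp [agreeCoord]

lemma agreeCoord_iff2 {A₁ A₂ A₃ : Type*} (a b : A₁ × A₂ × A₃) :
    agreeCoord 2 a b ↔ a.2.2 = b.2.2 := by simp [agreeCoord]

lemma agree_all_eq {A₁ A₂ A₃ : Type*} {a b : A₁ × A₂ × A₃}
    (h : ∀ s : Fin 3, agreeCoord s a b) : a = b := by
  have h0 := (agreeCoord_iff0 a b).mp (h 0)
  have h1 := (agreeCoord_iff1 a b).mp (h 1)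
  have h2 := (agreeCoord_iff2 a b).mp (h 2)
  exact Prod.ext h0 (Prod.ext h1 h2)

lemma beta_fix {A₁ A₂ A₃ : Type*} {Tp Tm : Set (A₁ × A₂ × A₃)}
    (hdisj : Tp ∩ Tm = ∅) (βj βk : Tm ≃ Tp) {j k : Fin 3} (hjk : j ≠ k)
    (hβj : IsBetaMap j βj) (hβk : IsBetaMap k βk)
    (a : Tp) : βk (βj.symm a) ≠ a := by
  intro hEq
  set x := βj.symm a with hx
  have hja : βj x = a := βj.apply_symm_apply a
  have hall : ∀ s : Fin 3, agreeCoord s x.val a.val := by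
    intro s
    by_cases hs : s = j
    · have hsk : s ≠ k := by rw [hs]; exact hjk
      have := hβk x s hsk
      rwa [hEq] at this
    · have := hβj x s hs
      rwa [hja] at this
  have hxa : x.val = a.val := agree_all_eq hall
  have : a.val ∈ Tp ∩ Tm := ⟨a.2, by rw [← hxa]; exact x.2⟩
  rw [hdisj] at this
  exact this

/-- For a 3-homogeneous bitrade (with no unused row, column or symbol labels),
the number of orbits of each `τᵢ` on `Tp` is `|Tp| / 3`; in particular the numbers
of orbits of `τ₁`, `τ₂`, `τ₃` coincide. -/
theorem three_homogeneous_orbit_count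
    {A₁ A₂ A₃ : Type*} [Finite A₁] [Finite A₂] [Finite A₃]
    (Tp Tm : Set (A₁ × A₂ × A₃)) (h : IsBitrade Tp Tm)
    (h3 : ThreeHomogeneous Tp)
    (hA1 : ∀ x : A₁, ∃ a ∈ Tp, a.1 = x)
    (hA2 : ∀ y : A₂, ∃ a ∈ Tp, a.2.1 = y)
    (hA3 : ∀ z : A₃, ∃ a ∈ Tp, a.2.2 = z)
    (β : Fin 3 → (Tm ≃ Tp)) (hβ : ∀ r : Fin 3, IsBetaMap r (β r))
    (τ : Fin 3 → Equiv.Perm Tp)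
    (hτ1 : τ 0 = (β 1).symm.trans (β 2))
    (hτ2 : τ 1 = (β 2).symm.trans (β 0))
    (hτ3 : τ 2 = (β 0).symm.trans (β 1)) :
    ∀ i : Fin 3,
      {o : Set Tp | ∃ a : Tp, o = {b : Tp | (τ i).SameCycle a b}}.ncard
        = Tp.ncard / 3 := by
  intro i
  have hdisj := h.disj
  fin_cases i
  · -- i = 0 : τ 0 = (β 1).symm.trans (β 2), preserved coordinate: first
    refine orbit_count (τ 0) (fun p => p.1) ?_ h3.1 hA1 ?_
    · intro a
      rw [hτ1]
      have hx := hβ 1 ((β 1).symm a) 0 (by decide)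
      rw [Equiv.apply_symm_apply] at hx
      have hy := hβ 2 ((β 1).symm a) 0 (by decide)
      rw [agreeCoord_iff0] at hx hy
      simp only [Equiv.trans_apply]
      rw [← hy, hx]
    · intro a hEq
      rw [hτ1] at hEq
      simp only [Equiv.trans_apply] at hEq
      exact beta_fix hdisj (β 1) (β 2) (by decide) (hβ 1) (hβ 2) a hEq
  · -- i = 1 : τ 1 = (β 2).symm.trans (β 0), preserved coordinate: second
    refine orbit_count (τ 1) (fun p => p.2.1) ?_ h3.2.1 hA2 ?_
    · intro a
      rw [hτ2]
      have hx := hβ 2 ((β 2).symm a) 1 (by decide)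
      rw [Equiv.apply_symm_apply] at hx
      have hy := hβ 0 ((β 2).symm a) 1 (by decide)
      rw [agreeCoord_iff1] at hx hy
      simp only [Equiv.trans_apply]
      rw [← hy, hx]
    · intro a hEq
      rw [hτ2] at hEq
      simp only [Equiv.trans_apply] at hEq
      exact beta_fix hdisj (β 2) (β 0) (by decide) (hβ 2) (hβ 0) a hEq
  · -- i = 2 : τ 2 = (β 0).symm.trans (β 1), preserved coordinate: third
    refine orbit_count (τ 2) (fun p => p.2.2) ?_ h3.2.2 hA3 ?_
    · intro a
      rw [hτ3]
      have hx := hβ 0 ((β 0).symm a) 2 (by decide)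
      rw [Equiv.apply_symm_apply] at hx
      have hy := hβ 1 ((β 0).symm a) 2 (by decide)
      rw [agreeCoord_iff2] at hx hy
      simp only [Equiv.trans_apply]
      rw [← hy, hx]
    · intro a hEq
      rw [hτ3] at hEq
      simp only [Equiv.trans_apply] at hEq
      exact beta_fix hdisj (β 0) (β 1) (by decide) (hβ 0) (hβ 1) a hEq
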